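/- Let 0 ≤ h ≤ (1/2)·ln(2+√3) and 0 < β ≤ (3/2)·cosh²(h). Then the fixed point equation Γ_{β,h}(λ) = λ has no positive solution: for every λ > 0, Γ_{β,h}(λ) < λ. -/

import Mathlib

open Real

private lemma tanh_hasDerivAt (x : ℝ) :
    HasDerivAt Real.tanh (1 - Real.tanh x ^ 2) x := by
  have h := (Real.hasDerivAt_sinh x).div (Real.hasDerivAt_cosh x)
    (ne_of_gt (Real.cosh_pos x))
  have hc := Real.cosh_pos x
  have hid : Real.cosh x ^ 2 - Real.sinh x ^ 2 = 1 := Real.cosh_sq_sub_sinh_sq x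
  have : (Real.cosh x * Real.cosh x - Real.sinh x * Real.sinh x) / Real.cosh x ^ 2
      = 1 - Real.tanh x ^ 2 := by
    rw [Real.tanh_eq_sinh_div_cosh]
    field_simp
  rw [this] at h
  have he : ∀ y, Real.sinh y / Real.cosh y = Real.tanh y :=
    fun y => (Real.tanh_eq_sinh_div_cosh y).symm
  have hf : Real.sinh / Real.cosh = Real.tanh := funext he
  rw [hf] at h
  exact h

private lemma tanh_add' (a b : ℝ) :
    Real.tanh (a + b) = (Real.tanh a + Real.tanh b) / (1 + Real.tanh a * Real.tanh b) := by
  have hca := Real.cosh_pos a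
  have hcb := Real.cosh_pos b
  have hcab := Real.cosh_pos (a + b)
  rw [Real.tanh_eq_sinh_div_cosh, Real.tanh_eq_sinh_div_cosh,
    Real.tanh_eq_sinh_div_cosh]
  have hne : 1 + Real.sinh a / Real.cosh a * (Real.sinh b / Real.cosh b) ≠ 0 := by
    have heq : 1 + Real.sinh a / Real.cosh a * (Real.sinh b / Real.cosh b)
        = Real.cosh (a + b) / (Real.cosh a * Real.cosh b) := by
      rw [Real.cosh_add]; field_simp
    rw [heq]; positivity
  rw [div_eq_div_iff (ne_of_gt hcab) hne, Real.sinh_add, Real.cosh_add]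
  have hca' : Real.cosh a ≠ 0 := hca.ne'
  have hcb' : Real.cosh b ≠ 0 := hcb.ne'
  field_simp

private lemma tanh_nonneg' {x : ℝ} (hx : 0 ≤ x) : 0 ≤ Real.tanh x := by
  rw [Real.tanh_eq_sinh_div_cosh]
  have hs : Real.sinh 0 ≤ Real.sinh x := Real.sinh_le_sinh.mpr hx
  rw [Real.sinh_zero] at hs
  exact div_nonneg hs (Real.cosh_pos x).le

private lemma tanh_pos' {x : ℝ} (hx : 0 < x) : 0 < Real.tanh x := by
  rw [Real.tanh_eq_sinh_div_cosh]
  exact div_pos (Real.sinh_pos_iff.mpr hx) (Real.cosh_pos x)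

private lemma tanh_lt_one' (x : ℝ) : Real.tanh x < 1 := by
  rw [Real.tanh_eq_sinh_div_cosh, div_lt_one (Real.cosh_pos x)]
  nlinarith [Real.cosh_sub_sinh x, Real.exp_pos (-x)]

/-- Bound on `tanh h` from `h ≤ (1/2) log (2+√3)`. -/
private lemma tanh_sq_le {h : ℝ} (hh : 0 ≤ h)
    (hh' : h ≤ 1 / 2 * Real.log (2 + Real.sqrt 3)) : Real.tanh h ^ 2 ≤ 1 / 3 := by
  have hs3 : (1:ℝ) < Real.sqrt 3 := by
    nlinarith [Real.sq_sqrt (by norm_num : (3:ℝ) ≥ 0), Real.sqrt_nonneg 3]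
  have hc : (0:ℝ) < 2 + Real.sqrt 3 := by linarith
  have hE : Real.exp (2 * h) ≤ 2 + Real.sqrt 3 := by
    calc Real.exp (2 * h) ≤ Real.exp (Real.log (2 + Real.sqrt 3)) := by
          apply Real.exp_le_exp.mpr; linarith
      _ = 2 + Real.sqrt 3 := Real.exp_log hc
  have hE1 : (1:ℝ) ≤ Real.exp (2 * h) := by
    rw [show (1:ℝ) = Real.exp 0 by simp]
    exact Real.exp_le_exp.mpr (by linarith)
  have hT : Real.tanh h = (Real.exp (2*h) - 1) / (Real.exp (2*h) + 1) := by
    rw [Real.tanh_eq_sinh_div_cosh, Real.sinh_eq, Real.cosh_eq]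
    have h1 : Real.exp h > 0 := Real.exp_pos h
    have h2 : Real.exp (-h) = (Real.exp h)⁻¹ := Real.exp_neg h
    have h3 : Real.exp (2*h) = Real.exp h * Real.exp h := by
      rw [← Real.exp_add]; ring_nf
    rw [h2, h3]
    have : Real.exp h * Real.exp h + 1 > 0 := by positivity
    field_simp
  have hle : Real.tanh h ≤ 1 / Real.sqrt 3 := by
    rw [hT, div_le_div_iff₀ (by linarith) (by positivity)]
    nlinarith [Real.sq_sqrt (by norm_num : (3:ℝ) ≥ 0), Real.sqrt_nonneg 3]
  have h0 : 0 ≤ Real.tanh h := tanh_nonneg' hh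
  have : Real.tanh h ^ 2 ≤ (1 / Real.sqrt 3) ^ 2 := by
    apply pow_le_pow_left₀ h0 hle
  calc Real.tanh h ^ 2 ≤ (1 / Real.sqrt 3) ^ 2 := this
    _ = 1 / 3 := by
        rw [div_pow, one_pow, Real.sq_sqrt (by norm_num : (3:ℝ) ≥ 0)]

/-- Key polynomial inequality. -/
private lemma poly_key {T H : ℝ} (hT0 : 0 < T) (hT1 : T < 1) (hH0 : 0 ≤ H)
    (hH1 : H < 1) (hH3 : H ^ 2 ≤ 1 / 3) :
    2 * H ^ 2 < ((T + H) / (1 + T * H)) ^ 2 + ((T - H) / (1 - T * H)) ^ 2 := by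
  have hTH : T * H < 1 := by nlinarith
  have hTH' : 0 ≤ T * H := by positivity
  have d1 : (0:ℝ) < 1 + T * H := by linarith
  have d2 : (0:ℝ) < 1 - T * H := by linarith
  have e1 : ((T + H) / (1 + T * H)) ^ 2 + ((T - H) / (1 - T * H)) ^ 2
      = ((T + H) ^ 2 * (1 - T * H) ^ 2 + (T - H) ^ 2 * (1 + T * H) ^ 2)
        / ((1 + T * H) ^ 2 * (1 - T * H) ^ 2) := by
    field_simp
  rw [e1, lt_div_iff₀ (by positivity)]
  have hpos : 0 < 1 - 3 * H ^ 2 + T ^ 2 * H ^ 2 * (1 + H ^ 2) := by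
    rcases eq_or_lt_of_le hH0 with h0 | h0
    · rw [← h0]; norm_num
    · have : 0 < T ^ 2 * H ^ 2 * (1 + H ^ 2) := by positivity
      nlinarith
  have hfac : 0 < 1 - H ^ 2 := by nlinarith
  nlinarith [mul_pos (mul_pos (mul_pos (by norm_num : (0:ℝ) < 2)
    (pow_pos hT0 2)) hfac) hpos]

/-- The derivative inequality: for x > 0,
`1 - tanh(x+h)^2 + (1 - tanh(x-h)^2) < 2 * (1 - tanh h ^2)`. -/
private lemma deriv_ineq {h x : ℝ} (hh : 0 ≤ h) (hh3 : Real.tanh h ^ 2 ≤ 1 / 3)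
    (hx : 0 < x) :
    (1 - Real.tanh (x + h) ^ 2) + (1 - Real.tanh (x - h) ^ 2)
      < 2 * (1 - Real.tanh h ^ 2) := by
  set T := Real.tanh x with hT
  set H := Real.tanh h with hH
  have hT0 : 0 < T := tanh_pos' hx
  have hT1 : T < 1 := tanh_lt_one' x
  have hH0 : 0 ≤ H := tanh_nonneg' hh
  have hH1 : H < 1 := tanh_lt_one' h
  have hadd : Real.tanh (x + h) = (T + H) / (1 + T * H) := tanh_add' x h
  have hsub : Real.tanh (x - h) = (T - H) / (1 - T * H) := by
    have := tanh_add' x (-h)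
    rw [Real.tanh_neg] at this
    rw [show x - h = x + -h by ring, this]
    ring_nf
    rfl
  rw [hadd, hsub]
  have := poly_key hT0 hT1 hH0 hH1 hh3
  linarith

/-- For `0 ≤ h ≤ (1/2)ln(2+√3)` and `0 < β ≤ (3/2)cosh²h`, the fixed point
equation `Γ_{β,h}(x) = x` has no positive solution: `Γ_{β,h}(x) < x` for all
`x > 0`. -/
theorem no_positive_fixed_point (β h : ℝ) (hβ : 0 < β) (hh : 0 ≤ h)
    (hh' : h ≤ 1 / 2 * Real.log (2 + Real.sqrt 3))
    (hβ' : β ≤ 3 / 2 * Real.cosh h ^ 2)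
    (Γ : ℝ → ℝ)
    (hΓ : ∀ x, Γ x = β / 3 * (Real.tanh (x + h) + Real.tanh (x - h))) :
    ∀ x : ℝ, 0 < x → Γ x < x := by
  have hh3 : Real.tanh h ^ 2 ≤ 1 / 3 := tanh_sq_le hh hh'
  -- F x = 2 (1 - tanh h ^2) x - tanh (x+h) - tanh (x-h)
  set c : ℝ := 2 * (1 - Real.tanh h ^ 2) with hc
  set F : ℝ → ℝ := fun x => c * x - Real.tanh (x + h) - Real.tanh (x - h) with hF
  have hderiv : ∀ x : ℝ, HasDerivAt F
      (c - (1 - Real.tanh (x + h) ^ 2) - (1 - Real.tanh (x - h) ^ 2)) x := by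
    intro x
    have h1 : HasDerivAt (fun x : ℝ => Real.tanh (x + h))
        (1 - Real.tanh (x + h) ^ 2) x := by
      have := (tanh_hasDerivAt (x + h)).comp x
        ((hasDerivAt_id x).add_const h)
      simpa [Function.comp_def] using this
    have h2 : HasDerivAt (fun x : ℝ => Real.tanh (x - h))
        (1 - Real.tanh (x - h) ^ 2) x := by
      have := (tanh_hasDerivAt (x - h)).comp x
        ((hasDerivAt_id x).sub_const h)
      simpa [Function.comp_def] using this
    have h0 : HasDerivAt (fun x : ℝ => c * x) c x := by
      simpa using (hasDerivAt_id x).const_mul c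
    exact (h0.sub h1).sub h2
  have hmono : StrictMonoOn F (Set.Ici (0:ℝ)) := by
    apply strictMonoOn_of_deriv_pos (convex_Ici 0)
    · have ctanh : Continuous Real.tanh := by
        have he : Real.tanh = fun y => Real.sinh y / Real.cosh y :=
          funext fun y => Real.tanh_eq_sinh_div_cosh y
        rw [he]
        exact Real.continuous_sinh.div Real.continuous_cosh
            (fun y => (Real.cosh_pos y).ne')
      exact Continuous.continuousOn
        (((continuous_const.mul continuous_id).sub
          (ctanh.comp (continuous_id.add continuous_const))).sub
          (ctanh.comp (continuous_id.sub continuous_const)))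
    · intro x hx
      rw [interior_Ici] at hx
      rw [(hderiv x).deriv]
      have := deriv_ineq hh hh3 (Set.mem_Ioi.mp hx)
      simp only [hc]
      linarith
  intro x hx
  have hF0 : F 0 = 0 := by
    simp only [hF]
    rw [zero_add, zero_sub, Real.tanh_neg]
    ring
  have hFx : 0 < F x := by
    have := hmono (Set.self_mem_Ici) (Set.mem_Ici.mpr hx.le) hx
    rwa [hF0] at this
  -- So tanh(x+h) + tanh(x-h) < c * x
  have hsum : Real.tanh (x + h) + Real.tanh (x - h) < c * x := by
    simp only [hF] at hFx; linarith
  rw [hΓ]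
  have hb3 : 0 < β / 3 := by linarith
  have hcoshpos : 0 < Real.cosh h ^ 2 := pow_pos (Real.cosh_pos h) 2
  have step1 : β / 3 * (Real.tanh (x + h) + Real.tanh (x - h)) < β / 3 * (c * x) :=
    (mul_lt_mul_iff_right₀ hb3).mpr hsum
  have htanh_id : c * Real.cosh h ^ 2 = 2 := by
    rw [hc, Real.tanh_eq_sinh_div_cosh, div_pow]
    have hne : Real.cosh h ^ 2 ≠ 0 := hcoshpos.ne'
    field_simp
    exact Real.cosh_sq_sub_sinh_sq h
  have hcpos : 0 < c := by rw [hc]; nlinarith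
  have step2 : β / 3 * (c * x) ≤ x := by
    have hc'' : c * Real.cosh h ^ 2 * x = 2 * x := by rw [htanh_id]
    nlinarith [mul_nonneg (sub_nonneg.mpr hβ') (mul_pos hcpos hx).le, hc'']
  linarith
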